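/- Let (b_n) be positive reals with b_n → 0, Σ_{n=1}^∞ b_n < ∞, and b_m/2 − Σ_{n=m+1}^∞ b_n > 0 for every m. Let ϖ₁ be a modulus of continuity and let (a_n) be positive even integers such that: (a1) a_n/a_{n−1} is a positive even integer; (a2) a_m/a_{m−1} ≥ (2π Σ_{n=1}^∞ b_n)/b_m; (a3) 1/a_m ≤ ϖ₁⁻¹(m^{−1}(b_m/2 − Σ_{n=m+1}^∞ b_n)). Then the continuous function f(x) = Σ_{n=1}^∞ b_n sin(π a_n x) is nowhere ϖ₁-continuous: for every x > 0 there is a sequence Δx_m → 0 with |f(x + Δx_m) − f(x)| / ϖ₁(|Δx_m|) ≥ m → +∞. -/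

import Mathlib

/-- A modulus of continuity. -/
def IsModulusOfContinuity (ϖ : ℝ → ℝ) : Prop :=
  StrictMonoOn ϖ (Set.Ioi 0) ∧ ContinuousOn ϖ (Set.Ioi 0) ∧
  (∀ x > (0:ℝ), 0 < ϖ x) ∧ Filter.Tendsto ϖ (nhdsWithin 0 (Set.Ioi 0)) (nhds 0)

/-- The Weierstrass-type series f(x) = Σ bₙ sin(π aₙ x). -/
noncomputable def weierF (a : ℕ → ℕ) (b : ℕ → ℝ) (x : ℝ) : ℝ :=
  ∑' n, b n * Real.sin (Real.pi * (a n : ℝ) * x)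

/-- sin is 1-Lipschitz. -/
lemma aux_sin_lip (A B : ℝ) : |Real.sin A - Real.sin B| ≤ |A - B| := by
  rw [Real.sin_sub_sin]
  calc |2 * Real.sin ((A - B) / 2) * Real.cos ((A + B) / 2)|
      = 2 * |Real.sin ((A - B) / 2)| * |Real.cos ((A + B) / 2)| := by
        rw [abs_mul, abs_mul]; norm_num
    _ ≤ 2 * |(A - B) / 2| * 1 := by
        apply mul_le_mul
        · exact mul_le_mul_of_nonneg_left Real.abs_sin_le_abs (by norm_num)
        · exact Real.abs_cos_le_one _
        · positivity
        · positivity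
    _ = |A - B| := by rw [abs_div, abs_two]; ring

/-- under (a1)–(a3) the continuous function f(x) = Σ bₙ sin(π aₙ x) is
nowhere ϖ₁-continuous: at every x > 0 there are perturbations Δxₘ → 0, Δxₘ ≠ 0, with
|f(x + Δxₘ) − f(x)| / ϖ₁(|Δxₘ|) ≥ m → +∞. -/
theorem stmt_16 (b : ℕ → ℝ) (hbpos : ∀ n, 0 < b n)
    (hb0 : Filter.Tendsto b Filter.atTop (nhds 0)) (hsum : Summable b)
    (htail : ∀ m : ℕ, 0 < b m / 2 - ∑' n, b (n + m + 1))
    (ϖ₁ : ℝ → ℝ) (hmod : IsModulusOfContinuity ϖ₁)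
    (a : ℕ → ℕ) (hapos : ∀ n, 0 < a n) (haeven : ∀ n, ∃ k : ℕ, 0 < k ∧ a n = 2 * k)
    (ha1 : ∀ m : ℕ, ∃ k : ℕ, 0 < k ∧ a (m + 1) = 2 * k * a m)
    (ha2 : ∀ m : ℕ, (2 * Real.pi * ∑' n, b n) / b (m + 1) ≤ (a (m + 1) : ℝ) / (a m : ℝ))
    (ha3 : ∀ m : ℕ, 1 ≤ m →
      ϖ₁ (1 / (a m : ℝ)) ≤ (m : ℝ)⁻¹ * (b m / 2 - ∑' n, b (n + m + 1))) :
    ∀ x : ℝ, 0 < x → ∃ Δ : ℕ → ℝ,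
      Filter.Tendsto Δ Filter.atTop (nhds 0) ∧ (∀ m, Δ m ≠ 0) ∧
      ∀ᶠ m : ℕ in Filter.atTop,
        (m : ℝ) ≤ |weierF a b (x + Δ m) - weierF a b x| / ϖ₁ |Δ m| := by
  intro x hx
  have hπ : (0:ℝ) < Real.pi := Real.pi_pos
  -- positivity of a as reals
  have hapos' : ∀ n, (0:ℝ) < (a n : ℝ) := fun n => by exact_mod_cast hapos n
  -- definitions
  set t : ℕ → ℝ := fun m => Int.fract ((a m : ℝ) * x) with ht
  set c : ℕ → ℝ := fun m => if t m ≤ 1/2 then (-(1:ℝ)/2) else 3/2 with hc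
  set Δ : ℕ → ℝ := fun m => (c m - t m) / (a m : ℝ) with hΔ
  have ht01 : ∀ m, 0 ≤ t m ∧ t m < 1 := fun m => ⟨Int.fract_nonneg _, Int.fract_lt_one _⟩
  -- numerator bounds
  have hnum : ∀ m, 1/2 ≤ |c m - t m| ∧ |c m - t m| ≤ 1 := by
    intro m
    obtain ⟨h0, h1⟩ := ht01 m
    by_cases h : t m ≤ 1/2
    · have hcm : c m = -1/2 := by simp only [hc, if_pos h]
      rw [hcm, abs_of_nonpos (by linarith)]
      constructor <;> linarith
    · push_neg at h
      have hcm : c m = 3/2 := by simp only [hc, if_neg (not_le.mpr h)]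
      rw [hcm, abs_of_nonneg (by linarith)]
      constructor <;> linarith
  have hΔabs : ∀ m, 1/2 * (1 / (a m : ℝ)) ≤ |Δ m| ∧ |Δ m| ≤ 1 / (a m : ℝ) := by
    intro m
    have h12 := hnum m
    have hpos := hapos' m
    have heq : |Δ m| = |c m - t m| / (a m : ℝ) := by
      rw [hΔ]; simp only []; rw [abs_div, abs_of_pos hpos]
    rw [heq]
    constructor
    · rw [show (1:ℝ)/2 * (1 / (a m : ℝ)) = (1/2) / (a m : ℝ) by ring]
      gcongr
      exact h12.1
    · rw [show (1:ℝ) / (a m : ℝ) = (1:ℝ) / (a m : ℝ) from rfl]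
      gcongr
      exact h12.2
  have hΔpos : ∀ m, 0 < |Δ m| := by
    intro m
    have h1 := (hΔabs m).1
    have h2 : (0:ℝ) < 1/2 * (1 / (a m : ℝ)) := by have := hapos' m; positivity
    linarith
  have hΔne : ∀ m, Δ m ≠ 0 := fun m h => by
    have := hΔpos m; rw [h] at this; simp at this
  -- a is monotone and grows at least like 2^m
  have hstep : ∀ m, 2 * a m ≤ a (m + 1) := by
    intro m
    obtain ⟨k, hk, hk2⟩ := ha1 m
    rw [hk2]
    have : 1 ≤ k := hk
    nlinarith [hapos m]
  have hmono : Monotone a := monotone_nat_of_le_succ (fun n => le_trans (by nlinarith [hapos n]) (hstep n))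
  have hgrow : ∀ m, 2 ^ m ≤ a m := by
    intro m
    induction m with
    | zero => simpa using Nat.succ_le_of_lt (hapos 0)
    | succ n ih =>
      calc 2 ^ (n+1) = 2 * 2 ^ n := by ring
        _ ≤ 2 * a n := by omega
        _ ≤ a (n+1) := hstep n
  -- the key identity: aₘ(x + Δₘ) = ⌊aₘ x⌋ + cₘ
  have hkey : ∀ m, (a m : ℝ) * (x + Δ m) = (⌊(a m : ℝ) * x⌋ : ℝ) + c m := by
    intro m
    have h := Int.floor_add_fract ((a m : ℝ) * x)
    have hpos := (hapos' m).ne'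
    rw [hΔ]; simp only []
    field_simp
    rw [ht] at *
    linarith
  -- for n > m, aₙ = 2 K aₘ
  have hfac : ∀ m n, m < n → ∃ K : ℕ, 0 < K ∧ a n = 2 * K * a m := by
    intro m n hmn
    induction n with
    | zero => omega
    | succ p ih =>
      rcases Nat.lt_succ_iff_lt_or_eq.mp hmn with h | h
      · obtain ⟨K, hK, hKe⟩ := ih h
        obtain ⟨k, hk, hke⟩ := ha1 p
        exact ⟨2 * k * K, by positivity, by rw [hke, hKe]; ring⟩
      · exact h ▸ ha1 m
  -- for n > m, sin (π aₙ (x+Δₘ)) = 0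
  have htailzero : ∀ m n, m < n → Real.sin (Real.pi * (a n : ℝ) * (x + Δ m)) = 0 := by
    intro m n hmn
    obtain ⟨K, hK, hKe⟩ := hfac m n hmn
    have han : (a n : ℝ) = 2 * (K:ℝ) * (a m : ℝ) := by exact_mod_cast hKe
    have h2 : (a n : ℝ) * (x + Δ m) = 2 * (K:ℝ) * ((⌊(a m : ℝ) * x⌋ : ℝ) + c m) := by
      rw [show (a n : ℝ) * (x + Δ m) = 2 * (K:ℝ) * ((a m : ℝ) * (x + Δ m)) by
        rw [han]; ring, hkey m]
    have h3 : Real.pi * (a n : ℝ) * (x + Δ m)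
        = ((2 * K * ⌊(a m : ℝ) * x⌋ + (if t m ≤ 1/2 then -(K:ℤ) else 3*K) : ℤ) : ℝ)
          * Real.pi := by
      rw [mul_assoc, h2]
      by_cases h : t m ≤ 1/2
      · have hcm : c m = -1/2 := by simp only [hc, if_pos h]
        rw [hcm, if_pos h]
        push_cast
        ring
      · have hcm : c m = 3/2 := by simp only [hc, if_neg h]
        rw [hcm, if_neg h]
        push_cast
        ring
    rw [h3, Real.sin_int_mul_pi]
  -- summability of the series at any point
  have hsummable : ∀ y : ℝ, Summable (fun n => b n * Real.sin (Real.pi * (a n : ℝ) * y)) := by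
    intro y
    apply Summable.of_norm_bounded hsum
    intro n
    rw [Real.norm_eq_abs, abs_mul, abs_of_pos (hbpos n)]
    calc b n * |Real.sin _| ≤ b n * 1 :=
      mul_le_mul_of_nonneg_left (Real.abs_sin_le_one _) (hbpos n).le
      _ = b n := mul_one _
  -- sum S
  set S := ∑' n, b n with hS
  have hSpos : 0 < S := by
    have := (htail 0)
    have h0 : ∑' n, b (n + 0 + 1) = ∑' n, b (n + 1) := by norm_num
    calc (0:ℝ) < b 0 := hbpos 0
      _ ≤ ∑' n, b n := Summable.le_tsum hsum 0 (fun n _ => (hbpos n).le)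
  -- main per-m estimate
  have hmain : ∀ m : ℕ, 1 ≤ m →
      (m : ℝ) ≤ |weierF a b (x + Δ m) - weierF a b x| / ϖ₁ |Δ m| := by
    intro m hm
    set y := x + Δ m with hy
    set g : ℝ → ℕ → ℝ := fun z n => b n * Real.sin (Real.pi * (a n : ℝ) * z) with hg
    -- split tsums
    have hsplit : ∀ z : ℝ, weierF a b z =
        ∑ n ∈ Finset.range (m+1), g z n + ∑' n, g z (n + (m+1)) := by
      intro z
      rw [weierF, ← Summable.sum_add_tsum_nat_add (f := g z) (m+1) (hsummable z)]
    have htz : ∑' n, g y (n + (m+1)) = 0 := by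
      have : (fun n => g y (n + (m+1))) = fun _ => (0:ℝ) := by
        funext n
        rw [hg]
        simp only []
        rw [htailzero m (n + (m+1)) (by omega)]
        ring
      rw [this, tsum_zero]
    -- tail of f at x
    have htb : |∑' n, g x (n + (m+1))| ≤ ∑' n, b (n + m + 1) := by
      have hsgx : Summable (fun n => g x (n + (m+1))) :=
        (summable_nat_add_iff (m+1)).2 (hsummable x)
      have hsb : Summable (fun n => b (n + m + 1)) :=
        (summable_nat_add_iff (f := b) (m+1)).2 hsum
      calc |∑' n, g x (n + (m+1))| ≤ ∑' n, |g x (n + (m+1))| := by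
            have := norm_tsum_le_tsum_norm (f := fun n => g x (n + (m+1))) hsgx.abs
            simpa [Real.norm_eq_abs] using this
        _ ≤ ∑' n, b (n + m + 1) := by
            apply Summable.tsum_le_tsum _ hsgx.abs hsb
            intro n
            rw [hg]
            simp only []
            rw [abs_mul, abs_of_pos (hbpos _)]
            have : n + (m + 1) = n + m + 1 := by omega
            rw [this]
            calc b (n+m+1) * |Real.sin _| ≤ b (n+m+1) * 1 :=
              mul_le_mul_of_nonneg_left (Real.abs_sin_le_one _) (hbpos _).le
              _ = b (n+m+1) := mul_one _
    -- the m-th term difference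
    have hmterm : b m ≤ |g y m - g x m| := by
      set N := ⌊(a m : ℝ) * x⌋ with hN
      have h1 : Real.sin (Real.pi * (a m : ℝ) * y) = -(-1:ℝ) ^ N := by
        rw [mul_assoc, hkey m, ← hN]
        have : Real.pi * ((N:ℝ) + c m) = Real.pi * c m + (N:ℝ) * Real.pi := by ring
        rw [this, Real.sin_add_int_mul_pi]
        by_cases h : t m ≤ 1/2
        · simp only [hc, if_pos h]
          rw [show Real.pi * (-1/2 : ℝ) = -(Real.pi/2) by ring, Real.sin_neg, Real.sin_pi_div_two]
          ring
        · simp only [hc, if_neg h]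
          rw [show Real.pi * (3/2 : ℝ) = Real.pi/2 + Real.pi by ring,
            Real.sin_add_pi, Real.sin_pi_div_two]
          ring
      have h2 : Real.sin (Real.pi * (a m : ℝ) * x) = (-1:ℝ) ^ N * Real.sin (Real.pi * t m) := by
        have hfl : (a m : ℝ) * x = (N : ℝ) + t m := by
          rw [hN, ht]; exact (Int.floor_add_fract _).symm
        rw [mul_assoc, hfl, show Real.pi * ((N:ℝ) + t m) = Real.pi * t m + (N:ℝ) * Real.pi by ring,
          Real.sin_add_int_mul_pi]
      have hsinpos : 0 ≤ Real.sin (Real.pi * t m) := by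
        apply Real.sin_nonneg_of_nonneg_of_le_pi
        · have := (ht01 m).1; positivity
        · have := (ht01 m).2
          nlinarith
      rw [hg]
      simp only []
      rw [h1, h2]
      have habs : |(-1:ℝ)^N| = 1 := by
        rcases Int.even_or_odd N with h | h
        · rw [h.neg_one_zpow, abs_one]
        · rw [h.neg_one_zpow, abs_neg, abs_one]
      calc b m = b m * |(-1:ℝ)^N| * 1 := by rw [habs]; ring
        _ ≤ b m * |(-1:ℝ)^N| * (1 + Real.sin (Real.pi * t m)) := by
            exact mul_le_mul_of_nonneg_left (by linarith)
              (mul_nonneg (hbpos m).le (abs_nonneg _))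
        _ = |b m * -(-1:ℝ)^N - b m * ((-1:ℝ)^N * Real.sin (Real.pi * t m))| := by
            rw [show b m * -(-1:ℝ)^N - b m * ((-1:ℝ)^N * Real.sin (Real.pi * t m))
              = -(b m * ((-1:ℝ)^N) * (1 + Real.sin (Real.pi * t m))) by ring]
            rw [abs_neg, abs_mul, abs_mul, abs_of_pos (hbpos m),
              abs_of_nonneg (by linarith : (0:ℝ) ≤ 1 + Real.sin (Real.pi * t m))]
    -- head bound
    have hhead : |∑ n ∈ Finset.range m, (g y n - g x n)| ≤ b m / 2 := by
      have hterm : ∀ n ∈ Finset.range m, |g y n - g x n| ≤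
          b n * (Real.pi * (a (m-1) : ℝ) / (a m : ℝ)) := by
        intro n hn
        rw [Finset.mem_range] at hn
        rw [hg]
        simp only []
        rw [← mul_sub, abs_mul, abs_of_pos (hbpos n)]
        apply mul_le_mul_of_nonneg_left _ (hbpos n).le
        calc |Real.sin (Real.pi * (a n:ℝ) * y) - Real.sin (Real.pi * (a n:ℝ) * x)|
            ≤ |Real.pi * (a n:ℝ) * y - Real.pi * (a n:ℝ) * x| := aux_sin_lip _ _
          _ = Real.pi * (a n:ℝ) * |Δ m| := by
              rw [show Real.pi * (a n:ℝ) * y - Real.pi * (a n:ℝ) * x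
                = Real.pi * (a n:ℝ) * (y - x) by ring, abs_mul,
                abs_of_pos (mul_pos hπ (hapos' n))]
              congr 1
              rw [hy]; ring_nf
          _ ≤ Real.pi * (a (m-1):ℝ) * (1 / (a m : ℝ)) := by
              apply mul_le_mul
              · apply mul_le_mul_of_nonneg_left _ hπ.le
                exact_mod_cast hmono (by omega : n ≤ m - 1)
              · exact (hΔabs m).2
              · exact (hΔpos m).le
              · positivity
          _ = Real.pi * (a (m-1) : ℝ) / (a m : ℝ) := by ring
      calc |∑ n ∈ Finset.range m, (g y n - g x n)|
          ≤ ∑ n ∈ Finset.range m, |g y n - g x n| := Finset.abs_sum_le_sum_abs _ _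
        _ ≤ ∑ n ∈ Finset.range m, b n * (Real.pi * (a (m-1) : ℝ) / (a m : ℝ)) :=
            Finset.sum_le_sum hterm
        _ = (∑ n ∈ Finset.range m, b n) * (Real.pi * (a (m-1) : ℝ) / (a m : ℝ)) :=
            (Finset.sum_mul _ _ _).symm
        _ ≤ S * (Real.pi * (a (m-1) : ℝ) / (a m : ℝ)) := by
            apply mul_le_mul_of_nonneg_right
            · exact Summable.sum_le_tsum _ (fun n _ => (hbpos n).le) hsum
            · positivity
        _ ≤ b m / 2 := by
            have h2 := ha2 (m-1)
            have hm1 : m - 1 + 1 = m := by omega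
            rw [hm1] at h2
            have hbm := hbpos m
            have ham := hapos' m
            have ham1 := hapos' (m-1)
            rw [div_le_div_iff₀ hbm ham1] at h2
            rw [show S * (Real.pi * (a (m-1):ℝ) / (a m:ℝ))
              = (S * Real.pi * (a (m-1):ℝ)) / (a m:ℝ) by ring, div_le_iff₀ ham]
            nlinarith
    -- assemble
    set Tm := ∑' n, b (n + m + 1) with hTm
    have hD : weierF a b y - weierF a b x =
        (∑ n ∈ Finset.range m, (g y n - g x n)) + (g y m - g x m)
          - ∑' n, g x (n + (m+1)) := by
      rw [hsplit y, hsplit x, htz]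
      rw [Finset.sum_range_succ, Finset.sum_range_succ, Finset.sum_sub_distrib]
      ring
    have hDlow : b m / 2 - Tm ≤ |weierF a b y - weierF a b x| := by
      rw [hD]
      have h1 := hmterm
      have h2 := hhead
      have h3 := htb
      have := abs_sub_abs_le_abs_sub (g y m - g x m)
        (-((∑ n ∈ Finset.range m, (g y n - g x n)) - ∑' n, g x (n + (m+1))))
      have habs2 : |(∑ n ∈ Finset.range m, (g y n - g x n)) - ∑' n, g x (n + (m+1))|
          ≤ b m / 2 + Tm := by
        calc |(∑ n ∈ Finset.range m, (g y n - g x n)) - ∑' n, g x (n + (m+1))|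
            ≤ |∑ n ∈ Finset.range m, (g y n - g x n)| + |∑' n, g x (n + (m+1))| :=
              abs_sub _ _
          _ ≤ b m / 2 + Tm := add_le_add h2 h3
      have heq : (∑ n ∈ Finset.range m, (g y n - g x n)) + (g y m - g x m)
          - ∑' n, g x (n + (m+1))
          = (g y m - g x m) - (-((∑ n ∈ Finset.range m, (g y n - g x n))
            - ∑' n, g x (n + (m+1)))) := by ring
      rw [heq]
      rw [abs_neg] at this
      linarith
    -- modulus bound
    have hϖ1 : ϖ₁ |Δ m| ≤ ϖ₁ (1 / (a m : ℝ)) := by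
      have hmem1 : |Δ m| ∈ Set.Ioi (0:ℝ) := hΔpos m
      have hmem2 : (1 / (a m : ℝ)) ∈ Set.Ioi (0:ℝ) :=
        Set.mem_Ioi.mpr (one_div_pos.mpr (hapos' m))
      exact hmod.1.monotoneOn hmem1 hmem2 (hΔabs m).2
    have hϖpos : 0 < ϖ₁ |Δ m| := hmod.2.2.1 _ (hΔpos m)
    rw [le_div_iff₀ hϖpos]
    have hmr : (0:ℝ) < (m:ℝ) := by exact_mod_cast hm
    calc (m:ℝ) * ϖ₁ |Δ m| ≤ (m:ℝ) * ((m:ℝ)⁻¹ * (b m / 2 - Tm)) := by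
          apply mul_le_mul_of_nonneg_left _ hmr.le
          exact le_trans hϖ1 (ha3 m hm)
      _ = b m / 2 - Tm := by field_simp
      _ ≤ |weierF a b y - weierF a b x| := hDlow
  -- tendsto
  have htend : Filter.Tendsto Δ Filter.atTop (nhds 0) := by
    have hb1 : ∀ m, |Δ m| ≤ ((1:ℝ)/2) ^ m := by
      intro m
      calc |Δ m| ≤ 1 / (a m : ℝ) := (hΔabs m).2
        _ ≤ 1 / (2:ℝ) ^ m := by
            apply one_div_le_one_div_of_le (by positivity)
            exact_mod_cast hgrow m
        _ = ((1:ℝ)/2) ^ m := by rw [div_pow, one_pow]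
    have h0 : Filter.Tendsto (fun m : ℕ => ((1:ℝ)/2) ^ m) Filter.atTop (nhds 0) := by
      apply tendsto_pow_atTop_nhds_zero_of_lt_one <;> norm_num
    exact squeeze_zero_norm (fun m => by simpa [Real.norm_eq_abs] using hb1 m) h0
  refine ⟨Δ, htend, hΔne, ?_⟩
  filter_upwards [Filter.eventually_ge_atTop 1] with m hm
  exact hmain m hm
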